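/- arXiv:0802.2769 — 2 statements merged into one kernel-verified Lean document; each statement's English description precedes it below -/
import Mathlib

section
/- Let I ⊂ S be a monomial ideal and I_j its j-th skeleton ideal. Then sdepth S/I ≥ sdepth S/I_j for all 0 ≤ j ≤ dim S/I. -/
open MvPolynomial

/-- The monomial `x^c = x_1^{c 1} ⋯ x_n^{c n}` in `K[x_1,…,x_n]`. -/
noncomputable def monX (n : ℕ) (K : Type*) [Field K] (c : Fin n → ℕ) :
    MvPolynomial (Fin n) K := ∏ i, X i ^ c i

/-- `ρ(b) = |{k : b k = g k}|`. -/
def rho {n : ℕ} (g b : Fin n → ℕ) : ℕ := (Finset.univ.filter fun k => b k = g k).card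

/-- The `j`-th skeleton ideal of `I` with respect to `g`: the ideal generated by `I`
together with all monomials `x^b` with `ρ(b) > j`. -/
noncomputable def skel {n : ℕ} (K : Type*) [Field K]
    (I : Ideal (MvPolynomial (Fin n) K)) (g : Fin n → ℕ) (j : ℕ) :
    Ideal (MvPolynomial (Fin n) K) :=
  I ⊔ Ideal.span {m | ∃ b : Fin n → ℕ, j < rho g b ∧ m = monX n K b}

/-- The characteristic poset `P^g_{S/I} = {b ∈ ℕ^n : b ≤ g, x^b ∉ I}`. -/
def charPoset {n : ℕ} (K : Type*) [Field K]
    (I : Ideal (MvPolynomial (Fin n) K)) (g : Fin n → ℕ) : Set (Fin n → ℕ) :=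
  {b | b ≤ g ∧ monX n K b ∉ I}

/-- The characteristic poset `P^g_{J/I} = {b ∈ ℕ^n : b ≤ g, x^b ∈ J \ I}`. -/
def charPoset2 {n : ℕ} (K : Type*) [Field K]
    (I J : Ideal (MvPolynomial (Fin n) K)) (g : Fin n → ℕ) : Set (Fin n → ℕ) :=
  {b | b ≤ g ∧ monX n K b ∈ J ∧ monX n K b ∉ I}

/-- The graded maximal ideal `m = (x_1,…,x_n)`. -/
noncomputable def mxId (n : ℕ) (K : Type*) [Field K] : Ideal (MvPolynomial (Fin n) K) :=
  Ideal.span (Set.range (X : Fin n → MvPolynomial (Fin n) K))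

/-- The depth of a module over `S = K[x_1,…,x_n]` with respect to the graded
maximal ideal: the supremum of lengths of regular sequences contained in `m`. -/
noncomputable def mdepth (n : ℕ) (K : Type*) [Field K] (M : Type*) [AddCommGroup M]
    [Module (MvPolynomial (Fin n) K) M] : ℕ :=
  sSup {r | ∃ rs : List (MvPolynomial (Fin n) K), rs.length = r ∧
    (∀ x ∈ rs, x ∈ mxId n K) ∧ RingTheory.Sequence.IsRegular M rs}

/-- Krull dimension of a module: `dim S/ann M`. -/
noncomputable def mdim (n : ℕ) (K : Type*) [Field K] (M : Type*) [AddCommGroup M]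
    [Module (MvPolynomial (Fin n) K) M] : WithBot (WithTop ℕ) :=
  ringKrullDim (MvPolynomial (Fin n) K ⧸ Module.annihilator (MvPolynomial (Fin n) K) M)

/-- `M` is a Cohen–Macaulay `S`-module of dimension `j`. -/
noncomputable def IsCMof (n : ℕ) (K : Type*) [Field K] (M : Type*) [AddCommGroup M]
    [Module (MvPolynomial (Fin n) K) M] (j : ℕ) : Prop :=
  mdepth n K M = j ∧ mdim n K M = (j : WithBot (WithTop ℕ))

/-- `M` is a Cohen–Macaulay `S`-module (depth = Krull dimension). -/
noncomputable def IsCM (n : ℕ) (K : Type*) [Field K] (M : Type*) [AddCommGroup M]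
    [Module (MvPolynomial (Fin n) K) M] : Prop :=
  (mdepth n K M : WithBot (WithTop ℕ)) = mdim n K M

/-- A partition of a subset `P` of `ℕ^n` into (nonempty) intervals `[cᵢ, dᵢ]`. -/
structure IntervalPartition {n : ℕ} (P : Set (Fin n → ℕ)) where
  r : ℕ
  c : Fin r → (Fin n → ℕ)
  d : Fin r → (Fin n → ℕ)
  le : ∀ i, c i ≤ d i
  cover : P = ⋃ i, Set.Icc (c i) (d i)
  disj : Pairwise (Function.onFun Disjoint fun i => Set.Icc (c i) (d i))

/-- The (combinatorial) Stanley depth of `S/I`: the maximum over interval partitions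
of the characteristic poset `P^g_{S/I}` of `min_i ρ(dᵢ)` (Herzog–Vladoiu–Zheng). -/
noncomputable def sdepthQ {n : ℕ} (K : Type*) [Field K]
    (I : Ideal (MvPolynomial (Fin n) K)) (g : Fin n → ℕ) : ℕ :=
  sSup {t | ∃ P : IntervalPartition (charPoset K I g), ∀ i, t ≤ rho g (P.d i)}

/-- The set of exponents `{c + e : supp e ⊆ Z}`, i.e. the exponents of the monomials
spanning the Stanley space `x^c K[Z]`. -/
def orth {n : ℕ} (c : Fin n → ℕ) (Z : Finset (Fin n)) : Set (Fin n → ℕ) :=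
  {b | c ≤ b ∧ ∀ k ∉ Z, b k = c k}

/-- A Stanley decomposition of `J/I` (for monomial ideals `I ⊆ J`), encoded by the
induced partition of the monomial `K`-basis of `J/I` into Stanley spaces `x^{cᵢ} K[Zᵢ]`. -/
structure StanleyDec {n : ℕ} (K : Type*) [Field K]
    (I J : Ideal (MvPolynomial (Fin n) K)) where
  r : ℕ
  c : Fin r → (Fin n → ℕ)
  Z : Fin r → Finset (Fin n)
  cover : {b | monX n K b ∈ J ∧ monX n K b ∉ I} = ⋃ i, orth (c i) (Z i)
  disj : Pairwise (Function.onFun Disjoint fun i => orth (c i) (Z i))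

/-- The `h`-regularity of `J/I`: the minimum over Stanley decompositions of `max_i |cᵢ|`. -/
noncomputable def hregQ {n : ℕ} (K : Type*) [Field K]
    (I J : Ideal (MvPolynomial (Fin n) K)) : ℕ :=
  sInf {h | ∃ D : StanleyDec K I J, ∀ i, (∑ k, D.c i k) ≤ h}

/-- `σ(Pt) = max_i max{|c| : c ∈ [cᵢ,dᵢ], c k = cᵢ k for all k with dᵢ k = g k}`. -/
noncomputable def sigmaP {n : ℕ} (g : Fin n → ℕ) {P : Set (Fin n → ℕ)}
    (Pt : IntervalPartition P) : ℕ :=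
  sSup {s | ∃ i : Fin Pt.r, ∃ cc ∈ Set.Icc (Pt.c i) (Pt.d i),
    (∀ k, Pt.d i k = g k → cc k = Pt.c i k) ∧ s = ∑ k, cc k}

/-- The truncation `I_{≥ j}`: the ideal generated by all homogeneous elements of `I`
of degree at least `j`. -/
noncomputable def trunc {n : ℕ} (K : Type*) [Field K]
    (I : Ideal (MvPolynomial (Fin n) K)) (j : ℕ) : Ideal (MvPolynomial (Fin n) K) :=
  Ideal.span {f | f ∈ I ∧ ∃ d, j ≤ d ∧ MvPolynomial.IsHomogeneous f d}

/-- A `d`-linear (graded free) resolution of the ideal `I`: a finite exact complex of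
finite free modules augmented to `I`, in which the entries of the augmentation are
homogeneous of degree `d` and all entries of the differentials are linear forms. -/
structure LinearRes {n : ℕ} (K : Type*) [Field K]
    (I : Ideal (MvPolynomial (Fin n) K)) (d : ℕ) where
  len : ℕ
  b : ℕ → ℕ
  fin : ∀ i, len < i → b i = 0
  ε : (Fin (b 0) →₀ MvPolynomial (Fin n) K) →ₗ[MvPolynomial (Fin n) K]
      MvPolynomial (Fin n) K
  δ : ∀ i : ℕ, (Fin (b (i+1)) →₀ MvPolynomial (Fin n) K) →ₗ[MvPolynomial (Fin n) K]
      (Fin (b i) →₀ MvPolynomial (Fin n) K)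
  hε : ∀ j, MvPolynomial.IsHomogeneous (ε (Finsupp.single j 1)) d
  hδ : ∀ i j k, MvPolynomial.IsHomogeneous ((δ i (Finsupp.single j 1)) k) 1
  surj : LinearMap.range ε = (I : Submodule (MvPolynomial (Fin n) K) (MvPolynomial (Fin n) K))
  exact0 : LinearMap.ker ε = LinearMap.range (δ 0)
  exact : ∀ i, LinearMap.ker (δ i) = LinearMap.range (δ (i+1))

/-- The Castelnuovo–Mumford regularity of `I`, via the Eisenbud–Goto characterization
`reg(I) = min{d : I_{≥ d} has a d-linear resolution}`. -/
noncomputable def regEG {n : ℕ} (K : Type*) [Field K]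
    (I : Ideal (MvPolynomial (Fin n) K)) : ℕ :=
  sInf {d | Nonempty (LinearRes K (trunc K I d) d)}

lemma monX_eq {n : ℕ} {K : Type*} [Field K] (c : Fin n → ℕ) :
    monX n K c = monomial (Finsupp.equivFunOnFinite.symm c) (1 : K) := by
  rw [monX, monomial_eq, C_1, one_mul, Finsupp.prod_fintype]
  · simp
  · intro i; exact pow_zero _

lemma monX_mem_span_iff {n : ℕ} {K : Type*} [Field K] (E : Set (Fin n → ℕ)) (b : Fin n → ℕ) :
    monX n K b ∈ Ideal.span (monX n K '' E) ↔ ∃ c ∈ E, c ≤ b := by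
  have himg : monX n K '' E =
      (fun s => monomial s (1 : K)) '' (Finsupp.equivFunOnFinite.symm '' E) := by
    rw [Set.image_image]; exact Set.image_congr fun c _ => monX_eq c
  rw [himg, monX_eq, mem_ideal_span_monomial_image]
  have hsupp : ((monomial (Finsupp.equivFunOnFinite.symm b)) (1 : K)).support
      = {Finsupp.equivFunOnFinite.symm b} := by classical rw [support_monomial, if_neg one_ne_zero]
  constructor
  · intro h
    obtain ⟨si, ⟨c, hc, rfl⟩, hle⟩ := h (Finsupp.equivFunOnFinite.symm b)
      (by rw [hsupp]; exact Finset.mem_singleton_self _)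
    exact ⟨c, hc, fun k => by simpa using Finsupp.le_def.mp hle k⟩
  · rintro ⟨c, hc, hle⟩ xi hxi
    rw [hsupp, Finset.mem_singleton] at hxi
    subst hxi
    exact ⟨_, ⟨c, hc, rfl⟩, Finsupp.le_def.mpr fun k => by simpa using hle k⟩

lemma monX_add {n : ℕ} {K : Type*} [Field K] (b c : Fin n → ℕ) :
    monX n K (b + c) = monX n K b * monX n K c := by
  simp [monX, pow_add, Finset.prod_mul_distrib]

lemma rho_le {n : ℕ} (g b : Fin n → ℕ) : rho g b ≤ n := by
  classical
  simpa [rho] using Finset.card_le_card (Finset.filter_subset _ (Finset.univ : Finset (Fin n)))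

lemma rho_mono {n : ℕ} {g b c : Fin n → ℕ} (hcb : c ≤ b) (hbg : b ≤ g) :
    rho g c ≤ rho g b := by
  classical
  apply Finset.card_le_card
  intro k hk
  simp only [Finset.mem_filter, Finset.mem_univ, true_and] at hk ⊢
  exact le_antisymm (hbg k) (hk ▸ hcb k)

lemma mem_skel_of_rho {n : ℕ} {K : Type*} [Field K]
    {I : Ideal (MvPolynomial (Fin n) K)} {g : Fin n → ℕ} {j : ℕ} {b : Fin n → ℕ}
    (hr : j < rho g b) : monX n K b ∈ skel K I g j :=
  Ideal.mem_sup_right (Ideal.subset_span ⟨b, hr, rfl⟩)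

lemma skel_eq_span {n m : ℕ} {K : Type*} [Field K] {a : Fin m → (Fin n → ℕ)}
    {I : Ideal (MvPolynomial (Fin n) K)}
    (hI : I = Ideal.span (Set.range fun i => monX n K (a i))) (g : Fin n → ℕ) (j : ℕ) :
    skel K I g j = Ideal.span (monX n K '' (Set.range a ∪ {b | j < rho g b})) := by
  rw [skel, hI, Set.image_union, ← Ideal.span_union]
  congr 2
  · rw [← Set.range_comp]; rfl
  · ext p; constructor
    · rintro ⟨b, hb, rfl⟩; exact ⟨b, hb, rfl⟩
    · rintro ⟨b, hb, rfl⟩; exact ⟨b, hb, rfl⟩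

lemma rho_of_mem_skel_not_mem {n m : ℕ} {K : Type*} [Field K] {a : Fin m → (Fin n → ℕ)}
    {I : Ideal (MvPolynomial (Fin n) K)}
    (hI : I = Ideal.span (Set.range fun i => monX n K (a i)))
    {g : Fin n → ℕ} {j : ℕ} {b : Fin n → ℕ} (hbg : b ≤ g)
    (hnI : monX n K b ∉ I) (hs : monX n K b ∈ skel K I g j) : j < rho g b := by
  rw [skel_eq_span hI, monX_mem_span_iff] at hs
  obtain ⟨c, hc | hc, hcb⟩ := hs
  · exfalso
    obtain ⟨i, rfl⟩ := hc
    apply hnI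
    have : b = a i + (b - a i) := by funext k; have h1 : a i k ≤ b k := hcb k; simp only [Pi.add_apply, Pi.sub_apply]; omega
    rw [this, monX_add]
    exact Ideal.mul_mem_right _ _ (hI ▸ Ideal.subset_span ⟨i, rfl⟩)
  · exact lt_of_lt_of_le hc (rho_mono hcb hbg)


/-- `sdepth S/I ≥ sdepth S/I_j` for all `0 ≤ j ≤ dim S/I`. -/
theorem sdepth_skeleton_le (n m : ℕ) (K : Type*) [Field K]
    (a : Fin m → (Fin n → ℕ)) (I : Ideal (MvPolynomial (Fin n) K))
    (hI : I = Ideal.span (Set.range fun i => monX n K (a i)))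
    (hmin : ∀ i j, i ≠ j → ¬ a i ≤ a j)
    (g : Fin n → ℕ) (hg : ∀ i, a i ≤ g)
    (d : ℕ) (hd : ringKrullDim (MvPolynomial (Fin n) K ⧸ I) = (d : WithBot (WithTop ℕ))) (j : ℕ) (hj : j ≤ d) :
    sdepthQ K (skel K I g j) g ≤ sdepthQ K I g := by
  classical
  rw [sdepthQ, sdepthQ]
  set A := {t | ∃ P : IntervalPartition (charPoset K (skel K I g j) g),
    ∀ i, t ≤ rho g (P.d i)} with hAdef
  set B := {t | ∃ P : IntervalPartition (charPoset K I g), ∀ i, t ≤ rho g (P.d i)} with hBdef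
  by_cases hA : BddAbove A
  swap
  · rw [csSup_of_not_bddAbove hA, csSup_empty]
    exact bot_le
  rcases Set.eq_empty_or_nonempty A with hAe | hAne
  · rw [hAe, csSup_empty]; exact bot_le
  apply csSup_le hAne
  intro t ht
  obtain ⟨P, hP⟩ := ht
  have hr : 0 < P.r := by
    rcases Nat.eq_zero_or_pos P.r with h0 | h
    · obtain ⟨u, hu⟩ := hA
      have hmem : ∀ t' : ℕ, t' ∈ A := fun t' =>
        ⟨P, fun i => absurd i.isLt (by omega)⟩
      exact absurd (hu (hmem (u+1))) (by omega)
    · exact h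
  have hsub : ∀ i : Fin P.r, Set.Icc (P.c i) (P.d i) ⊆ charPoset K (skel K I g j) g := by
    intro i b hb
    have hb2 : b ∈ ⋃ i, Set.Icc (P.c i) (P.d i) := Set.mem_iUnion.mpr ⟨i, hb⟩
    rwa [← P.cover] at hb2
  have hdmem : ∀ i, P.d i ∈ charPoset K (skel K I g j) g :=
    fun i => hsub i ⟨P.le i, le_refl _⟩
  have hdj : ∀ i, rho g (P.d i) ≤ j := by
    intro i
    by_contra h
    push_neg at h
    exact (hdmem i).2 (mem_skel_of_rho h)
  have htj : t ≤ j := le_trans (hP ⟨0, hr⟩) (hdj ⟨0, hr⟩)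
  have hskelsub : charPoset K (skel K I g j) g ⊆ charPoset K I g :=
    fun b hb => ⟨hb.1, fun hbI => hb.2 (Ideal.mem_sup_left hbI)⟩
  set D := charPoset K I g \ charPoset K (skel K I g j) g with hD
  have hDfin : D.Finite := Set.Finite.subset (Set.finite_Iic g) (fun b hb => hb.1.1)
  set e := hDfin.toFinset with he
  set m' := e.card with hm'
  set f : Fin m' → (Fin n → ℕ) := fun i => ((e.equivFin.symm i : e) : Fin n → ℕ) with hf
  have hfD : ∀ i, f i ∈ D := fun i => hDfin.mem_toFinset.mp (e.equivFin.symm i).2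
  have hfinj : Function.Injective f := fun i1 i2 h =>
    e.equivFin.symm.injective (Subtype.ext h)
  have hfsurj : ∀ b ∈ D, ∃ i, f i = b := fun b hb =>
    ⟨e.equivFin ⟨b, hDfin.mem_toFinset.mpr hb⟩, by simp [hf]⟩
  have hDrho : ∀ i, j < rho g (f i) := by
    intro i
    have h1 := hfD i
    have hskel : monX n K (f i) ∈ skel K I g j := by
      by_contra hc
      exact h1.2 ⟨h1.1.1, hc⟩
    exact rho_of_mem_skel_not_mem hI h1.1.1 h1.1.2 hskel
  have htB : t ∈ B := by
    refine ⟨⟨P.r + m', Fin.addCases P.c f, Fin.addCases P.d f, ?_, ?_, ?_⟩, ?_⟩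
    · intro i
      induction i using Fin.addCases with
      | left i => simpa using P.le i
      | right i => simp
    · ext b
      simp only [Set.mem_iUnion]
      constructor
      · intro hb
        by_cases hbs : b ∈ charPoset K (skel K I g j) g
        · rw [P.cover] at hbs
          obtain ⟨i, hi⟩ := Set.mem_iUnion.mp hbs
          exact ⟨Fin.castAdd m' i, by simpa using hi⟩
        · obtain ⟨i, hi⟩ := hfsurj b ⟨hb, hbs⟩
          refine ⟨Fin.natAdd P.r i, ?_⟩
          simp [Fin.addCases_right, hi, Set.mem_Icc]
      · rintro ⟨i, hi⟩
        induction i using Fin.addCases with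
        | left i =>
          simp only [Fin.addCases_left] at hi
          exact hskelsub (hsub i hi)
        | right i =>
          simp only [Fin.addCases_right, Set.mem_Icc] at hi
          have hbe : b = f i := le_antisymm hi.2 hi.1
          exact hbe ▸ (hfD i).1
    · intro i1 i2
      induction i1 using Fin.addCases with
      | left i1 =>
        induction i2 using Fin.addCases with
        | left i2 =>
          intro hne
          have h12 : i1 ≠ i2 := fun h => hne (congrArg _ h)
          have := P.disj h12
          simpa [Function.onFun] using this
        | right i2 =>
          intro _
          simp only [Function.onFun, Fin.addCases_left, Fin.addCases_right, Set.Icc_self]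
          rw [Set.disjoint_singleton_right]
          intro hmem
          exact (hfD i2).2 (hsub i1 hmem)
      | right i1 =>
        induction i2 using Fin.addCases with
        | left i2 =>
          intro _
          simp only [Function.onFun, Fin.addCases_left, Fin.addCases_right, Set.Icc_self]
          rw [Set.disjoint_singleton_left]
          intro hmem
          exact (hfD i1).2 (hsub i2 hmem)
        | right i2 =>
          intro hne
          have h12 : i1 ≠ i2 := fun h => hne (congrArg _ h)
          simp only [Function.onFun, Fin.addCases_right, Set.Icc_self]
          exact Set.disjoint_singleton.mpr (fun h => h12 (hfinj h))
    · intro i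
      induction i using Fin.addCases with
      | left i => simpa using hP i
      | right i =>
        simp only [Fin.addCases_right]
        exact le_trans htj (le_of_lt (hDrho i))
  have hBdd : BddAbove B := by
    refine ⟨n, fun t' ht' => ?_⟩
    obtain ⟨P', hP'⟩ := ht'
    have hr' : 0 < P'.r := by
      by_contra h
      push_neg at h
      have hne2 : P.d ⟨0, hr⟩ ∈ charPoset K I g := hskelsub (hdmem ⟨0, hr⟩)
      rw [P'.cover] at hne2
      obtain ⟨i, _⟩ := Set.mem_iUnion.mp hne2
      exact absurd i.isLt (by omega)
    exact le_trans (hP' ⟨0, hr'⟩) (rho_le g _)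
  exact le_csSup hBdd htB
end

section
/- Let I ⊆ J be monomial ideals and g ∈ ℕ^n dominating all minimal generator exponents of I and J. Then hreg(J/I) = min over partitions P : P^g_{J/I} = ⋃[c_i,d_i] of σ(P), where σ(P) = max_i max{|c| : c ∈ [c_i,d_i], c(j) = c_i(j) for all j with x_j ∈ Z_{d_i}}. In particular hreg(J/I) is computable in finitely many steps. -/
open MvPolynomial

lemma monX_eq_monomial {n : ℕ} {K : Type*} [Field K] (c : Fin n → ℕ) :
    monX n K c = monomial (Finsupp.equivFunOnFinite.symm c) 1 := by
  rw [monX, monomial_eq, C_1, one_mul, Finsupp.prod_fintype]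
  · simp
  · intro i; exact pow_zero _

lemma mem_span_monX {n : ℕ} {K : Type*} [Field K] {m : ℕ} (v : Fin m → (Fin n → ℕ))
    (b : Fin n → ℕ) :
    monX n K b ∈ Ideal.span (Set.range fun i => monX n K (v i)) ↔ ∃ i, v i ≤ b := by
  have h1 : (Set.range fun i => monX n K (v i)) =
      (fun s => monomial s (1:K)) '' (Set.range fun i => Finsupp.equivFunOnFinite.symm (v i)) := by
    simp only [monX_eq_monomial, ← Set.range_comp]
    rfl
  rw [monX_eq_monomial, h1, mem_ideal_span_monomial_image]
  simp [support_monomial, Finsupp.le_def, Pi.le_def]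

lemma existsPart {n : ℕ} (K : Type*) [Field K]
    (I J : Ideal (MvPolynomial (Fin n) K)) (g : Fin n → ℕ) :
    Nonempty (IntervalPartition (charPoset2 K I J g)) := by
  classical
  have hfin : (charPoset2 K I J g).Finite :=
    (Set.finite_Icc 0 g).subset (fun b hb => ⟨fun k => Nat.zero_le _, hb.1⟩)
  let e : Fin hfin.toFinset.card ≃ {x // x ∈ hfin.toFinset} := hfin.toFinset.equivFin.symm
  refine ⟨⟨hfin.toFinset.card, fun j => ↑(e j), fun j => ↑(e j), fun j => le_rfl, ?_, ?_⟩⟩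
  · ext b
    simp only [Set.mem_iUnion, Set.Icc_self, Set.mem_singleton_iff]
    constructor
    · intro hb
      refine ⟨e.symm ⟨b, hfin.mem_toFinset.mpr hb⟩, ?_⟩
      simp [e.apply_symm_apply]
    · rintro ⟨j, hj⟩
      subst hj
      exact hfin.mem_toFinset.mp (e j).2
  · intro j j' hne
    simp only [Function.onFun, Set.Icc_self, Set.disjoint_singleton]
    intro hEq
    exact hne (e.injective (Subtype.ext hEq))


lemma decToPart {n : ℕ} (K : Type*) [Field K]
    (I J : Ideal (MvPolynomial (Fin n) K)) (g : Fin n → ℕ)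
    (D : StanleyDec K I J) (h : ℕ) (hh : ∀ i, (∑ k, D.c i k) ≤ h) :
    ∃ P : IntervalPartition (charPoset2 K I J g), sigmaP g P ≤ h := by
  classical
  set F : Finset (Fin D.r) := Finset.univ.filter (fun i => D.c i ≤ g) with hF
  let e : Fin F.card ≃ {x // x ∈ F} := F.equivFin.symm
  have hcg : ∀ j : Fin F.card, D.c ↑(e j) ≤ g := by
    intro j
    exact (Finset.mem_filter.mp (e j).2).2
  set cf : Fin F.card → (Fin n → ℕ) := fun j => D.c ↑(e j) with hcf
  set df : Fin F.card → (Fin n → ℕ) :=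
    (fun j k => if k ∈ D.Z ↑(e j) then g k else D.c ↑(e j) k) with hdf
  have hle : ∀ j, cf j ≤ df j := by
    intro j k
    by_cases hk : k ∈ D.Z ↑(e j) <;> simp [hcf, hdf, hk, hcg j k]
  have hIO : ∀ j, Set.Icc (cf j) (df j) ⊆ orth (D.c ↑(e j)) (D.Z ↑(e j)) := by
    intro j b hb
    refine ⟨hb.1, fun k hk => ?_⟩
    have h1 := hb.1 k
    have h2 := hb.2 k
    simp only [hdf, hk, if_false] at h2
    exact le_antisymm h2 h1
  have hcover : charPoset2 K I J g = ⋃ j, Set.Icc (cf j) (df j) := by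
    ext b
    simp only [Set.mem_iUnion]
    constructor
    · rintro ⟨hbg, hbJ, hbI⟩
      have : b ∈ ⋃ i, orth (D.c i) (D.Z i) := D.cover ▸ (⟨hbJ, hbI⟩ : b ∈ {b | _ ∧ _})
      obtain ⟨i, hbi⟩ := Set.mem_iUnion.mp this
      have hiF : i ∈ F :=
        Finset.mem_filter.mpr ⟨Finset.mem_univ _, le_trans hbi.1 hbg⟩
      refine ⟨e.symm ⟨i, hiF⟩, ?_, ?_⟩
      · simpa [hcf, e.apply_symm_apply] using hbi.1
      · intro k
        simp only [hdf, e.apply_symm_apply]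
        by_cases hk : k ∈ D.Z i
        · simpa [hk] using hbg k
        · simp [hk, (hbi.2 k hk).le]
    · rintro ⟨j, hbj⟩
      have hborth := hIO j hbj
      have hbW : b ∈ {b | monX n K b ∈ J ∧ monX n K b ∉ I} := by
        rw [D.cover]
        exact Set.mem_iUnion.mpr ⟨↑(e j), hborth⟩
      refine ⟨?_, hbW.1, hbW.2⟩
      intro k
      by_cases hk : k ∈ D.Z ↑(e j)
      · have := hbj.2 k
        simpa [hdf, hk] using this
      · have := hborth.2 k hk
        rw [this]
        exact hcg j k
  have hdisj : Pairwise (Function.onFun Disjoint fun j => Set.Icc (cf j) (df j)) := by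
    intro j j' hne
    have hne' : (↑(e j) : Fin D.r) ≠ ↑(e j') := by
      intro hEq
      exact hne (e.injective (Subtype.ext hEq))
    exact Disjoint.mono (hIO j) (hIO j') (D.disj hne')
  refine ⟨⟨F.card, cf, df, hle, hcover, hdisj⟩, ?_⟩
  apply csSup_le'
  rintro s ⟨j, cc, hIcc, hfix, rfl⟩
  have hccf : cc = cf j := by
    funext k
    by_cases hdk : df j k = g k
    · exact hfix k hdk
    · have hk : k ∉ D.Z ↑(e j) := by
        intro hkZ
        exact hdk (by simp [hdf, hkZ])
      have hdc : df j k = cf j k := by simp [hdf, hcf, hk]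
      exact le_antisymm (hdc ▸ hIcc.2 k) (hIcc.1 k)
  rw [hccf]
  exact hh _


lemma partToDec {n : ℕ} (K : Type*) [Field K]
    (I J : Ideal (MvPolynomial (Fin n) K)) (g : Fin n → ℕ)
    (hmem : ∀ b : Fin n → ℕ, (monX n K b ∈ J ∧ monX n K b ∉ I) ↔
      (monX n K (b ⊓ g) ∈ J ∧ monX n K (b ⊓ g) ∉ I))
    (P : IntervalPartition (charPoset2 K I J g)) :
    ∃ D : StanleyDec K I J, ∀ i, (∑ k, D.c i k) ≤ sigmaP g P := by
  classical
  have hsub : ∀ i, Set.Icc (P.c i) (P.d i) ⊆ charPoset2 K I J g := by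
    intro i x hx
    rw [P.cover]
    exact Set.mem_iUnion.mpr ⟨i, hx⟩
  have hdg : ∀ i, P.d i ≤ g := fun i => (hsub i ⟨P.le i, le_rfl⟩).1
  set Zi : Fin P.r → Finset (Fin n) :=
    (fun i => Finset.univ.filter fun k => P.d i k = g k) with hZi
  have hZmem : ∀ i k, k ∈ Zi i ↔ P.d i k = g k := by
    intro i k; simp [hZi]
  set Ti : Fin P.r → Finset (Fin n → ℕ) :=
    (fun i => (Finset.Icc (P.c i) (P.d i)).filter fun cc => ∀ k ∈ Zi i, cc k = P.c i k) with hTi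
  have hTmem : ∀ i cc, cc ∈ Ti i ↔
      (P.c i ≤ cc ∧ cc ≤ P.d i) ∧ ∀ k ∈ Zi i, cc k = P.c i k := by
    intro i cc; rw [hTi]; simp [Finset.mem_filter, Finset.mem_Icc]
  -- key: members of a Stanley space land (after ⊓ g) in the right interval
  have horth : ∀ i cc, cc ∈ Ti i → ∀ b, b ∈ orth cc (Zi i) →
      b ⊓ g ∈ Set.Icc (P.c i) (P.d i) := by
    intro i cc hcc b hb
    obtain ⟨⟨hccl, hccu⟩, hfix⟩ := (hTmem i cc).mp hcc
    constructor <;> intro k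
    · by_cases hk : k ∈ Zi i
      · have hdgk := (hZmem i k).mp hk
        have h1 : P.c i k ≤ b k := (hfix k hk) ▸ hb.1 k
        have h2 : P.c i k ≤ g k := le_trans (hccl k) (le_trans (hccu k) (hdg i k))
        simp only [Pi.inf_apply]
        exact le_inf h1 h2
      · have hbk : b k = cc k := hb.2 k hk
        have : b k ≤ g k := hbk ▸ le_trans (hccu k) (hdg i k)
        simp only [Pi.inf_apply, inf_eq_left.mpr this]
        exact hbk ▸ hccl k
    · by_cases hk : k ∈ Zi i
      · have hdgk := (hZmem i k).mp hk
        simp only [Pi.inf_apply]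
        exact le_trans inf_le_right (le_of_eq hdgk.symm)
      · have hbk : b k = cc k := hb.2 k hk
        have : b k ≤ g k := hbk ▸ le_trans (hccu k) (hdg i k)
        simp only [Pi.inf_apply, inf_eq_left.mpr this]
        exact hbk ▸ hccu k
  -- index set
  set S : Finset ((_ : Fin P.r) × (Fin n → ℕ)) := Finset.univ.sigma (fun i => Ti i) with hS
  let e : Fin S.card ≃ {x // x ∈ S} := S.equivFin.symm
  have heS : ∀ j : Fin S.card, ((e j).1).2 ∈ Ti ((e j).1).1 :=
    fun j => (Finset.mem_sigma.mp (e j).2).2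
  -- pairwise disjointness of the Stanley spaces
  have hdisj2 : ∀ (i i' : Fin P.r) (cc cc' : Fin n → ℕ), cc ∈ Ti i → cc' ∈ Ti i' →
      (⟨i, cc⟩ : (_ : Fin P.r) × (Fin n → ℕ)) ≠ ⟨i', cc'⟩ →
      Disjoint (orth cc (Zi i)) (orth cc' (Zi i')) := by
    intro i i' cc cc' hcc hcc' hne
    rw [Set.disjoint_left]
    intro b hb hb'
    by_cases hi : i = i'
    · subst hi
      apply hne
      have : cc = cc' := by
        funext k
        by_cases hk : k ∈ Zi i
        · rw [((hTmem i cc).mp hcc).2 k hk, ((hTmem i cc').mp hcc').2 k hk]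
        · rw [← hb.2 k hk, ← hb'.2 k hk]
      rw [this]
    · exact Set.disjoint_left.mp (P.disj hi) (horth i cc hcc b hb) (horth i' cc' hcc' b hb')
  -- the cover
  have hcover : {b | monX n K b ∈ J ∧ monX n K b ∉ I} =
      ⋃ j : Fin S.card, orth ((e j).1).2 (Zi ((e j).1).1) := by
    ext b
    simp only [Set.mem_setOf_eq, Set.mem_iUnion]
    constructor
    · intro hb
      have hb' : b ⊓ g ∈ charPoset2 K I J g :=
        ⟨inf_le_right, ((hmem b).mp hb).1, ((hmem b).mp hb).2⟩
      rw [P.cover] at hb'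
      obtain ⟨i, hbi⟩ := Set.mem_iUnion.mp hb'
      set cc : Fin n → ℕ := (fun k => if P.d i k = g k then P.c i k else b k) with hcc
      have hbeq : ∀ k, ¬ P.d i k = g k → b k ≤ P.d i k ∧ (b ⊓ g) k = b k := by
        intro k hk
        have hdlt : P.d i k < g k := lt_of_le_of_ne (hdg i k) hk
        have h2 : (b ⊓ g) k ≤ P.d i k := hbi.2 k
        have h3 : (b ⊓ g) k = min (b k) (g k) := by simp [Pi.inf_apply]
        omega
      have hccT : cc ∈ Ti i := by
        refine (hTmem i cc).mpr ⟨⟨?_, ?_⟩, ?_⟩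
        · intro k
          by_cases hk : P.d i k = g k
          · simp [hcc, hk]
          · have h1 := hbi.1 k
            have h2 := (hbeq k hk).2
            simp only [hcc, hk, if_false]
            exact h2 ▸ h1
        · intro k
          by_cases hk : P.d i k = g k
          · simpa [hcc, hk] using P.le i k
          · simpa [hcc, hk] using (hbeq k hk).1
        · intro k hk
          simp [hcc, (hZmem i k).mp hk]
      have hborth : b ∈ orth cc (Zi i) := by
        constructor
        · intro k
          by_cases hk : P.d i k = g k
          · have h1 := hbi.1 k
            have h4 : (b ⊓ g) k ≤ b k := by
              simp only [Pi.inf_apply]; exact inf_le_left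
            simp only [hcc, hk, if_true]
            exact le_trans h1 h4
          · simp [hcc, hk]
        · intro k hk
          rw [hZmem i k] at hk
          simp [hcc, hk]
      refine ⟨e.symm ⟨⟨i, cc⟩, Finset.mem_sigma.mpr ⟨Finset.mem_univ _, hccT⟩⟩, ?_⟩
      simpa [e.apply_symm_apply] using hborth
    · rintro ⟨j, hbj⟩
      exact (hmem b).mpr (hsub _ (horth _ _ (heS j) b hbj)).2
  refine ⟨⟨S.card, fun j => ((e j).1).2, fun j => Zi ((e j).1).1, hcover, ?_⟩, ?_⟩
  · intro j j' hne
    refine hdisj2 _ _ _ _ (heS j) (heS j') ?_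
    intro hEq
    exact hne (e.injective (Subtype.ext hEq))
  · intro j
    have hcc := heS j
    apply le_csSup
    · refine ⟨∑ i : Fin P.r, ∑ k, P.d i k, ?_⟩
      rintro s ⟨i, cc, hIcc, -, rfl⟩
      calc ∑ k, cc k ≤ ∑ k, P.d i k := Finset.sum_le_sum fun k _ => hIcc.2 k
        _ ≤ _ := Finset.single_le_sum (f := fun i => ∑ k, P.d i k)
              (fun i _ => Nat.zero_le _) (Finset.mem_univ i)
    · obtain ⟨⟨h1, h2⟩, h3⟩ := (hTmem _ _).mp hcc
      exact ⟨((e j).1).1, ((e j).1).2, ⟨h1, h2⟩,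
        fun k hk => h3 k ((hZmem _ k).mpr hk), rfl⟩

/-- for monomial ideals `I ⊆ J` with `g` dominating all minimal
generator exponents, `hreg(J/I) = min over partitions P of P^g_{J/I} of σ(P)`. -/
theorem hreg_eq_min_sigma (n mi mj : ℕ) (K : Type*) [Field K]
    (a : Fin mi → (Fin n → ℕ)) (bgen : Fin mj → (Fin n → ℕ))
    (I J : Ideal (MvPolynomial (Fin n) K))
    (hI : I = Ideal.span (Set.range fun i => monX n K (a i)))
    (hJ : J = Ideal.span (Set.range fun i => monX n K (bgen i)))
    (hIJ : I ≤ J)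
    (hminI : ∀ i j, i ≠ j → ¬ a i ≤ a j) (hminJ : ∀ i j, i ≠ j → ¬ bgen i ≤ bgen j)
    (g : Fin n → ℕ) (hga : ∀ i, a i ≤ g) (hgb : ∀ i, bgen i ≤ g) :
    hregQ K I J = sInf {s | ∃ P : IntervalPartition (charPoset2 K I J g), s = sigmaP g P} := by
  classical
  have hgen : ∀ {m : ℕ} (v : Fin m → (Fin n → ℕ)), (∀ i, v i ≤ g) →
      ∀ b : Fin n → ℕ, ((∃ i, v i ≤ b) ↔ (∃ i, v i ≤ b ⊓ g)) := by
    intro m v hv b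
    constructor
    · rintro ⟨i, hi⟩; exact ⟨i, le_inf hi (hv i)⟩
    · rintro ⟨i, hi⟩; exact ⟨i, le_trans hi inf_le_left⟩
  have hmem : ∀ b : Fin n → ℕ, (monX n K b ∈ J ∧ monX n K b ∉ I) ↔
      (monX n K (b ⊓ g) ∈ J ∧ monX n K (b ⊓ g) ∉ I) := by
    intro b
    rw [hI, hJ, mem_span_monX, mem_span_monX, mem_span_monX, mem_span_monX,
      hgen bgen hgb b, hgen a hga b]
  have hL : {h | ∃ D : StanleyDec K I J, ∀ i, (∑ k, D.c i k) ≤ h}.Nonempty := by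
    obtain ⟨P0⟩ := existsPart K I J g
    obtain ⟨D0, hD0⟩ := partToDec K I J g hmem P0
    exact ⟨sigmaP g P0, D0, hD0⟩
  have hR : {s | ∃ P : IntervalPartition (charPoset2 K I J g), s = sigmaP g P}.Nonempty := by
    obtain ⟨P0⟩ := existsPart K I J g
    exact ⟨sigmaP g P0, P0, rfl⟩
  apply le_antisymm
  · obtain ⟨P, hP⟩ := Nat.sInf_mem hR
    obtain ⟨D, hD⟩ := partToDec K I J g hmem P
    rw [hP]
    exact Nat.sInf_le ⟨D, hD⟩
  · obtain ⟨D, hD⟩ := Nat.sInf_mem hL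
    obtain ⟨P, hP⟩ := decToPart K I J g D _ hD
    exact le_trans (Nat.sInf_le ⟨P, rfl⟩) hP
end
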